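/- arXiv:2107.13868 — 9 statements merged into one kernel-verified Lean document; each statement's English description precedes it below -/
import Mathlib

section
/- Let n be a positive integer and let a, b, c, d be integers such that a·d − b·c ≡ 1 (mod n), c ≠ 0, and gcd(d, n) = 1. Then there exist integers a', b', d' with a' ≡ a (mod n), b' ≡ b (mod n), d' ≡ d (mod n), and a'·d' − b'·c = 1 (so that the matrix with rows (a', b') and (c, d') lies in SL₂(ℤ)). -/
/-!
First move `d` within its class mod `n` so that it becomes coprime to `c`: the unit `d` of
`ℤ/|n|` lifts to a unit of `ℤ/|nc|`. Once `d` is coprime to `c n`, Bézout gives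
`x d + y c n = 1 + b c`, and `a' = x`, `b' = b - y n` work; `a' ≡ a` follows from
`a' d ≡ 1 + b c ≡ a d` by cancelling the unit `d` mod `n`.
-/

theorem Int.exists_isCoprime_add_mul {d n c : ℤ} (hdn : IsCoprime d n) (hc : c ≠ 0) :
    ∃ k, IsCoprime (d + n * k) c := by
  rcases eq_or_ne n 0 with rfl | hn
  · have hd : d ∣ 1 := isUnit_iff_dvd_one.mp (isCoprime_zero_right.mp hdn)
    exact ⟨0, by simpa using isCoprime_one_left.of_isCoprime_of_dvd_left hd⟩
  set N := n.natAbs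
  set M := N * c.natAbs
  have : NeZero M := ⟨by positivity⟩
  have hd : IsUnit (d : ZMod N) := (ZMod.coe_int_isUnit_iff_isCoprime d N).mpr
    (Int.natCast_natAbs n ▸ hdn.symm.abs_left)
  obtain ⟨u, hu⟩ := ZMod.unitsMap_surjective (dvd_mul_right N c.natAbs) hd.unit
  set d' : ℤ := ((u : ZMod M).val : ℤ)
  have hd'M : IsCoprime (n * c) d' := by
    have := (ZMod.coe_int_isUnit_iff_isCoprime d' M).mp (by simp [d'])
    rwa [Nat.cast_mul, Int.natCast_natAbs, Int.natCast_natAbs, ← abs_mul,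
      IsCoprime.abs_left_iff] at this
  have hd'd : d' ≡ d [ZMOD n] := by
    rw [← Int.modEq_natAbs, ← ZMod.intCast_eq_intCast_iff]
    simpa [d', ZMod.unitsMap_val, ZMod.natCast_val] using congrArg Units.val hu
  obtain ⟨k, hk⟩ := hd'd.symm.dvd
  exact ⟨k, by rw [← hk]; simpa using hd'M.of_mul_left_right.symm⟩

theorem Int.exists_modEq_det_eq_one {n a b c d : ℤ} (hdet : a * d - b * c ≡ 1 [ZMOD n])
    (hdc : IsCoprime d c) (hdn : IsCoprime d n) :
    ∃ a' b', a' ≡ a [ZMOD n] ∧ b' ≡ b [ZMOD n] ∧ a' * d - b' * c = 1 := by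
  obtain ⟨u, v, huv⟩ := hdc.mul_right hdn
  set e := 1 + b * c
  refine ⟨u * e, b - v * e * n, Int.modEq_iff_dvd.mpr ?_, Int.modEq_iff_dvd.mpr ⟨v * e, by ring⟩,
    by linear_combination e * huv⟩
  have hdvd : n ∣ (a - u * e) * d := by
    obtain ⟨m, hm⟩ := hdet.symm.dvd
    exact ⟨m + v * e * c, by linear_combination hm - e * huv⟩
  exact hdn.symm.dvd_of_dvd_mul_right hdvd

theorem stmt_1_general (n : ℤ) (a b c d : ℤ)
    (hdet : a * d - b * c ≡ 1 [ZMOD n]) (hc : c ≠ 0) (hgcd : Int.gcd d n = 1) :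
    ∃ a' b' d' : ℤ, a' ≡ a [ZMOD n] ∧ b' ≡ b [ZMOD n] ∧ d' ≡ d [ZMOD n] ∧
      a' * d' - b' * c = 1 := by
  have hdn : IsCoprime d n := Int.isCoprime_iff_gcd_eq_one.mpr hgcd
  obtain ⟨k, hk⟩ := Int.exists_isCoprime_add_mul hdn hc
  have hd' : d + n * k ≡ d [ZMOD n] := Int.modEq_iff_dvd.mpr ⟨-k, by ring⟩
  have hdet' : a * (d + n * k) - b * c ≡ 1 [ZMOD n] :=
    ((hd'.mul_left a).sub_right _).trans hdet
  obtain ⟨a', b', ha', hb', h⟩ :=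
    Int.exists_modEq_det_eq_one hdet' hk (hdn.add_mul_left_left k)
  exact ⟨a', b', d + n * k, ha', hb', hd', h⟩

/-- Let `n` be a positive integer and `a, b, c, d` integers with
`a·d − b·c ≡ 1 (mod n)`, `c ≠ 0`, and `gcd(d, n) = 1`. Then there exist integers
`a'`, `b'`, `d'` congruent to `a`, `b`, `d` modulo `n` respectively with
`a'·d' − b'·c = 1`, so that `!![a', b'; c, d']` lies in `SL₂(ℤ)`. -/
theorem stmt_1 (n : ℤ) (hn : 0 < n) (a b c d : ℤ)
    (hdet : a * d - b * c ≡ 1 [ZMOD n]) (hc : c ≠ 0) (hgcd : Int.gcd d n = 1) :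
    ∃ a' b' d' : ℤ, a' ≡ a [ZMOD n] ∧ b' ≡ b [ZMOD n] ∧ d' ≡ d [ZMOD n] ∧
      a' * d' - b' * c = 1 :=
  stmt_1_general n a b c d hdet hc hgcd
end

section
/- Γ(p^l, p^{l+k}) is a normal subgroup of Γ₀(p^k): it is a subgroup of Γ₀(p^k), and for every X ∈ Γ₀(p^k) and every Y ∈ Γ(p^l, p^{l+k}), the conjugate X·Y·X⁻¹ belongs to Γ(p^l, p^{l+k}). -/
open Matrix

/-- Membership in `Γ₀(p^k) ⊆ GL₂(ℤ_p)`: the `(2,1)` entry is divisible by `p^k`. -/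
def InGamma0 (p : ℕ) [Fact p.Prime] (k : ℕ) (X : GL (Fin 2) ℤ_[p]) : Prop :=
  (p : ℤ_[p]) ^ k ∣ (X : Matrix (Fin 2) (Fin 2) ℤ_[p]) 1 0

/-- Membership in `Γ(p^l, p^{l+k}) ⊆ GL₂(ℤ_p)`: `X − 1 ∈ diag(p^l, p^{l+k})·M₂(ℤ_p)`,
i.e. `p^l` divides both entries of the first row of `X − 1` and `p^{l+k}` divides both
entries of the second row of `X − 1`. -/
def InGammaFull (p : ℕ) [Fact p.Prime] (l k : ℕ) (X : GL (Fin 2) ℤ_[p]) : Prop :=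
  (p : ℤ_[p]) ^ l ∣ ((X : Matrix (Fin 2) (Fin 2) ℤ_[p]) - 1) 0 0 ∧
  (p : ℤ_[p]) ^ l ∣ ((X : Matrix (Fin 2) (Fin 2) ℤ_[p]) - 1) 0 1 ∧
  (p : ℤ_[p]) ^ (l + k) ∣ ((X : Matrix (Fin 2) (Fin 2) ℤ_[p]) - 1) 1 0 ∧
  (p : ℤ_[p]) ^ (l + k) ∣ ((X : Matrix (Fin 2) (Fin 2) ℤ_[p]) - 1) 1 1


section aux
variable {p : ℕ} [Fact p.Prime]

private lemma GLmul_sub_one (X Y : GL (Fin 2) ℤ_[p]) :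
    ((X * Y : GL (Fin 2) ℤ_[p]) : Matrix (Fin 2) (Fin 2) ℤ_[p]) - 1 =
      ((X : Matrix (Fin 2) (Fin 2) ℤ_[p]) - 1) * ((Y : Matrix (Fin 2) (Fin 2) ℤ_[p]) - 1)
      + ((X : Matrix (Fin 2) (Fin 2) ℤ_[p]) - 1) + ((Y : Matrix (Fin 2) (Fin 2) ℤ_[p]) - 1) := by
  rw [Units.val_mul]; noncomm_ring

private lemma GLinv_sub_one (Y : GL (Fin 2) ℤ_[p]) :
    ((Y⁻¹ : GL (Fin 2) ℤ_[p]) : Matrix (Fin 2) (Fin 2) ℤ_[p]) - 1 =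
      -(((Y : Matrix (Fin 2) (Fin 2) ℤ_[p]) - 1) *
        ((Y⁻¹ : GL (Fin 2) ℤ_[p]) : Matrix (Fin 2) (Fin 2) ℤ_[p])) := by
  have h : (Y : Matrix (Fin 2) (Fin 2) ℤ_[p]) *
      ((Y⁻¹ : GL (Fin 2) ℤ_[p]) : Matrix (Fin 2) (Fin 2) ℤ_[p]) = 1 := by
    rw [← Units.val_mul, mul_inv_cancel, Units.val_one]
  rw [sub_mul, h, one_mul, neg_sub]

private lemma GLconj_sub_one (X Y : GL (Fin 2) ℤ_[p]) :
    ((X * Y * X⁻¹ : GL (Fin 2) ℤ_[p]) : Matrix (Fin 2) (Fin 2) ℤ_[p]) - 1 =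
      (X : Matrix (Fin 2) (Fin 2) ℤ_[p]) * ((Y : Matrix (Fin 2) (Fin 2) ℤ_[p]) - 1) *
        ((X⁻¹ : GL (Fin 2) ℤ_[p]) : Matrix (Fin 2) (Fin 2) ℤ_[p]) := by
  have h : (X : Matrix (Fin 2) (Fin 2) ℤ_[p]) *
      ((X⁻¹ : GL (Fin 2) ℤ_[p]) : Matrix (Fin 2) (Fin 2) ℤ_[p]) = 1 := by
    rw [← Units.val_mul, mul_inv_cancel, Units.val_one]
  simp only [Units.val_mul]
  rw [mul_sub, mul_one, sub_mul, h]

end aux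

/-- `Γ(p^l, p^{l+k})` is a normal subgroup of `Γ₀(p^k)`: it is a
subgroup of `Γ₀(p^k)`, and for every `X ∈ Γ₀(p^k)` and `Y ∈ Γ(p^l, p^{l+k})` the
conjugate `X·Y·X⁻¹` belongs to `Γ(p^l, p^{l+k})`. -/
theorem stmt_3 (p : ℕ) [Fact p.Prime] (l k : ℕ) :
    (∀ X : GL (Fin 2) ℤ_[p], InGammaFull p l k X → InGamma0 p k X) ∧
    InGammaFull p l k 1 ∧
    (∀ X Y : GL (Fin 2) ℤ_[p],
      InGammaFull p l k X → InGammaFull p l k Y → InGammaFull p l k (X * Y)) ∧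
    (∀ X : GL (Fin 2) ℤ_[p], InGammaFull p l k X → InGammaFull p l k X⁻¹) ∧
    (∀ X Y : GL (Fin 2) ℤ_[p],
      InGamma0 p k X → InGammaFull p l k Y → InGammaFull p l k (X * Y * X⁻¹)) := by
  have hlk : (p : ℤ_[p]) ^ l ∣ (p : ℤ_[p]) ^ (l + k) := pow_dvd_pow _ (Nat.le_add_right l k)
  have hmix : ∀ a b : ℤ_[p], (p : ℤ_[p]) ^ k ∣ a → (p : ℤ_[p]) ^ l ∣ b →
      (p : ℤ_[p]) ^ (l + k) ∣ a * b := by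
    intro a b ha hb
    rw [pow_add, mul_comm ((p : ℤ_[p]) ^ l)]
    exact mul_dvd_mul ha hb
  refine ⟨?_, ?_, ?_, ?_, ?_⟩
  · rintro X ⟨-, -, h, -⟩
    have e : ((X : Matrix (Fin 2) (Fin 2) ℤ_[p]) - 1) 1 0
        = (X : Matrix (Fin 2) (Fin 2) ℤ_[p]) 1 0 := by
      simp [Matrix.sub_apply, Matrix.one_apply]
    exact dvd_trans (pow_dvd_pow _ (Nat.le_add_left k l)) (e ▸ h)
  · simp [InGammaFull]
  · rintro X Y ⟨hX00, hX01, hX10, hX11⟩ ⟨hY00, hY01, hY10, hY11⟩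
    refine ⟨?_, ?_, ?_, ?_⟩ <;>
    · rw [GLmul_sub_one]
      simp only [Matrix.add_apply, Matrix.mul_apply, Fin.sum_univ_two]
      refine dvd_add (dvd_add (dvd_add ?_ ?_) ?_) ?_ <;>
      first
        | exact dvd_mul_of_dvd_left (by assumption) _
        | exact dvd_mul_of_dvd_right (by assumption) _
        | exact dvd_mul_of_dvd_left (hlk.trans (by assumption)) _
        | assumption
  · rintro Y ⟨hY00, hY01, hY10, hY11⟩
    refine ⟨?_, ?_, ?_, ?_⟩ <;>
    · rw [GLinv_sub_one]
      simp only [Matrix.neg_apply, Matrix.mul_apply, Fin.sum_univ_two]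
      refine dvd_neg.mpr (dvd_add ?_ ?_) <;>
        exact dvd_mul_of_dvd_left (by assumption) _
  · rintro X Y hX ⟨hY00, hY01, hY10, hY11⟩
    refine ⟨?_, ?_, ?_, ?_⟩ <;>
    · rw [GLconj_sub_one]
      simp only [Matrix.mul_apply, Fin.sum_univ_two]
      refine dvd_add (dvd_mul_of_dvd_left (dvd_add ?_ ?_) _)
        (dvd_mul_of_dvd_left (dvd_add ?_ ?_) _) <;>
      first
        | exact Dvd.dvd.mul_left (by assumption) _
        | exact Dvd.dvd.mul_left (hlk.trans (by assumption)) _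
        | exact hmix _ _ hX (by assumption)
end

section
/- For every X ∈ Γ₀(p^k) with det X ≡ 1 (mod p^l), there exists a matrix Y ∈ M₂(ℤ) with det Y = 1 and with (2,1) entry divisible by p^k, such that (viewing Y as a matrix over ℤ_p via the inclusion ℤ → ℤ_p) X − Y ∈ A·M₂(ℤ_p), i.e., p^l divides both entries of the first row of X − Y and p^{l+k} divides both entries of the second row of X − Y. -/
open Matrix

/-- Core Bezout fix-up lemma over ℤ. -/
lemma core_fix (a b c d P Q : ℤ) (hP : IsCoprime a P) (h1 : Q ∣ a*d - b*c - 1)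
    (h2 : Q ∣ P*c) :
    ∃ b' c' d', a*d' - b'*c' = 1 ∧ P ∣ b' - b ∧ Q ∣ c' - c ∧ Q ∣ d' - d := by
  obtain ⟨x, y, hxy⟩ := hP
  set b' : ℤ := b + P*(y*(1-b)) with hb'def
  have hb' : b' = 1 + a*(-(x*(1-b))) := by
    rw [hb'def]; linear_combination (1-b) * hxy
  have hco : IsCoprime a b' := ⟨x*(1-b), 1, by rw [hb']; ring⟩
  obtain ⟨e, he⟩ : Q ∣ a*d - b'*c - 1 := by
    have : a*d - b'*c - 1 = (a*d - b*c - 1) - (y*(1-b))*(P*c) := by rw [hb'def]; ring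
    rw [this]; exact dvd_sub h1 (Dvd.dvd.mul_left h2 _)
  obtain ⟨x', y', hxy'⟩ := hco
  refine ⟨b', c + Q*(e*y'), d + Q*(-(e*x')), ?_, ⟨y*(1-b), by rw [hb'def]; ring⟩,
    ⟨e*y', by ring⟩, ⟨-(e*x'), by ring⟩⟩
  linear_combination he - Q*e*hxy'

lemma cast_pow_dvd {p : ℕ} [Fact p.Prime] (n : ℕ) {m : ℤ} (h : (p:ℤ)^n ∣ m) :
    (p:ℤ_[p])^n ∣ (m : ℤ_[p]) := (PadicInt.pow_p_dvd_int_iff n m).mpr h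

/-- For every `X ∈ Γ₀(p^k)` with `det X ≡ 1 (mod p^l)`, there exists
`Y ∈ M₂(ℤ)` with `det Y = 1` and `(2,1)` entry divisible by `p^k` such that, viewing
`Y` over `ℤ_p`, `X − Y ∈ diag(p^l, p^{l+k})·M₂(ℤ_p)`, i.e. `p^l` divides both entries
of the first row of `X − Y` and `p^{l+k}` divides both entries of the second row. -/
theorem stmt_6 (p : ℕ) [Fact p.Prime] (l k : ℕ) (X : GL (Fin 2) ℤ_[p])
    (hX : (p : ℤ_[p]) ^ k ∣ (X : Matrix (Fin 2) (Fin 2) ℤ_[p]) 1 0)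
    (hdet : (p : ℤ_[p]) ^ l ∣ (Matrix.det (X : Matrix (Fin 2) (Fin 2) ℤ_[p]) - 1)) :
    ∃ Y : Matrix (Fin 2) (Fin 2) ℤ, Y.det = 1 ∧ (p : ℤ) ^ k ∣ Y 1 0 ∧
      (p : ℤ_[p]) ^ l ∣
        ((X : Matrix (Fin 2) (Fin 2) ℤ_[p]) - Y.map (Int.cast : ℤ → ℤ_[p])) 0 0 ∧
      (p : ℤ_[p]) ^ l ∣
        ((X : Matrix (Fin 2) (Fin 2) ℤ_[p]) - Y.map (Int.cast : ℤ → ℤ_[p])) 0 1 ∧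
      (p : ℤ_[p]) ^ (l + k) ∣
        ((X : Matrix (Fin 2) (Fin 2) ℤ_[p]) - Y.map (Int.cast : ℤ → ℤ_[p])) 1 0 ∧
      (p : ℤ_[p]) ^ (l + k) ∣
        ((X : Matrix (Fin 2) (Fin 2) ℤ_[p]) - Y.map (Int.cast : ℤ → ℤ_[p])) 1 1 := by
  have hp : p.Prime := Fact.out
  have hpZ : Prime (p : ℤ) := Nat.prime_iff_prime_int.mp hp
  set Xm : Matrix (Fin 2) (Fin 2) ℤ_[p] := (X : Matrix (Fin 2) (Fin 2) ℤ_[p]) with hXm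
  obtain ⟨U, hU⟩ : IsUnit Xm.det := (Matrix.isUnit_iff_isUnit_det Xm).mp X.isUnit
  set v : ℤ_[p] := ↑U⁻¹ with hv
  have huv : Xm.det * v = 1 := by rw [← hU, hv]; exact U.mul_inv
  set a : ℤ_[p] := Xm 0 0
  set b : ℤ_[p] := Xm 0 1
  set c : ℤ_[p] := Xm 1 0
  set d : ℤ_[p] := Xm 1 1
  have hdet2 : Xm.det = a * d - b * c := Matrix.det_fin_two Xm
  have hdet1 : (v * a) * d - (v * b) * c = 1 := by rw [← huv, hdet2]; ring
  have h1v : (p:ℤ_[p])^l ∣ 1 - v := by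
    have h : (Xm.det - 1) * v = 1 - v := by linear_combination huv
    exact h ▸ hdet.mul_right v
  -- integer approximations mod p^M, M = l + k + 1
  set M : ℕ := l + k + 1 with hM
  set A : ℤ := (PadicInt.appr (v*a) M : ℤ) with hA
  set B : ℤ := (PadicInt.appr (v*b) M : ℤ) with hB
  set C : ℤ := (PadicInt.appr c M : ℤ) with hC
  set D : ℤ := (PadicInt.appr d M : ℤ) with hD
  have happr : ∀ x : ℤ_[p], (p:ℤ_[p])^M ∣ x - ((PadicInt.appr x M : ℤ) : ℤ_[p]) := by
    intro x
    have := PadicInt.appr_spec M x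
    rw [Ideal.mem_span_singleton] at this
    exact_mod_cast this
  have hAa : (p:ℤ_[p])^M ∣ v*a - (A:ℤ_[p]) := happr _
  have hBb : (p:ℤ_[p])^M ∣ v*b - (B:ℤ_[p]) := happr _
  have hCc : (p:ℤ_[p])^M ∣ c - (C:ℤ_[p]) := happr _
  have hDd : (p:ℤ_[p])^M ∣ d - (D:ℤ_[p]) := happr _
  -- the integer determinant is ≡ 1 mod p^M
  have hDint : (p:ℤ)^M ∣ A*D - B*C - 1 := by
    rw [← PadicInt.pow_p_dvd_int_iff]
    push_cast
    have key : (A:ℤ_[p])*D - B*C - 1 =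
        ((v*a)*d - (v*b)*c - 1) - (v*a)*(d - D) - D*(v*a - A)
          + (v*b)*(c - C) + C*(v*b - B) := by ring
    rw [key, hdet1]
    simp only [sub_self, zero_sub]
    refine dvd_add (dvd_add (dvd_sub (dvd_neg.mpr ?_) ?_) ?_) ?_
    · exact hDd.mul_left _
    · exact hAa.mul_left _
    · exact hCc.mul_left _
    · exact hBb.mul_left _
  -- p^k divides C (as integer)
  have hkM : k ≤ M := by omega
  have hCk : (p:ℤ)^k ∣ C := by
    rw [← PadicInt.pow_p_dvd_int_iff]
    have : (C:ℤ_[p]) = c - (c - C) := by ring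
    rw [this]
    exact dvd_sub hX ((pow_dvd_pow _ hkM).trans hCc)
  have hlM : l ≤ M := by omega
  have hlkM : l + k ≤ M := by omega
  by_cases hpa : (p:ℤ_[p]) ∣ v*a
  · -- a is NOT a unit, so c is a unit and k = 0
    have hpc : ¬ (p:ℤ_[p]) ∣ c := by
      intro h
      have h1 : (p:ℤ_[p]) ∣ 1 := by
        calc (p:ℤ_[p]) ∣ (v*a)*d - (v*b)*c := dvd_sub (hpa.mul_right d) (h.mul_left _)
          _ = 1 := hdet1
      have := isUnit_of_dvd_one h1
      rw [PadicInt.isUnit_iff, PadicInt.norm_p] at this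
      have : (p:ℝ) = 1 := by rwa [inv_eq_one] at this
      exact_mod_cast hp.ne_one (by exact_mod_cast this)
    have hk0 : k = 0 := by
      by_contra hk
      exact hpc ((dvd_pow_self (p:ℤ_[p]) hk).trans hX)
    subst hk0
    have hpC : ¬ (p:ℤ) ∣ C := by
      intro h
      apply hpc
      have : (p:ℤ_[p]) ∣ (C:ℤ_[p]) := by
        have := cast_pow_dvd (p := p) 1 (pow_one (p:ℤ) ▸ h)
        rwa [pow_one] at this
      have h2 : c = (c - C) + (C:ℤ_[p]) := by ring
      rw [h2]
      exact dvd_add ((dvd_pow_self _ (by omega : M ≠ 0)).trans hCc) this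
    have hcop : IsCoprime (C : ℤ) ((p:ℤ)^l) :=
      ((hpZ.coprime_iff_not_dvd.mpr hpC).symm).pow_right
    have h1 : (p:ℤ)^l ∣ C*(-B) - D*(-A) - 1 := by
      have : C*(-B) - D*(-A) - 1 = A*D - B*C - 1 := by ring
      rw [this]
      exact (pow_dvd_pow _ (by omega : l ≤ M)).trans hDint
    have h2 : (p:ℤ)^l ∣ (p:ℤ)^l * (-A) := dvd_mul_right _ _
    obtain ⟨B', C', D', hdet', hB', hC', hD'⟩ := core_fix C D (-A) (-B) ((p:ℤ)^l) ((p:ℤ)^l) hcop h1 h2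
    refine ⟨!![-C', -D'; C, B'], ?_, ?_, ?_, ?_, ?_, ?_⟩
    · rw [Matrix.det_fin_two_of]; linear_combination hdet'
    · simp
    · show (p:ℤ_[p])^l ∣ a - ((-C' : ℤ) : ℤ_[p])
      have heq : a - ((-C' : ℤ) : ℤ_[p]) =
          a * (1 - v) + (v*a - (A:ℤ_[p])) + ((C' - (-A) : ℤ) : ℤ_[p]) := by
        push_cast; ring
      rw [heq]
      exact dvd_add (dvd_add (h1v.mul_left a) ((pow_dvd_pow _ hlM).trans hAa))
        (cast_pow_dvd l hC')
    · show (p:ℤ_[p])^l ∣ b - ((-D' : ℤ) : ℤ_[p])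
      have heq : b - ((-D' : ℤ) : ℤ_[p]) =
          b * (1 - v) + (v*b - (B:ℤ_[p])) + ((D' - (-B) : ℤ) : ℤ_[p]) := by
        push_cast; ring
      rw [heq]
      exact dvd_add (dvd_add (h1v.mul_left b) ((pow_dvd_pow _ hlM).trans hBb))
        (cast_pow_dvd l hD')
    · show (p:ℤ_[p])^(l+0) ∣ c - ((C : ℤ) : ℤ_[p])
      rw [Nat.add_zero]
      exact (pow_dvd_pow _ hlM).trans hCc
    · show (p:ℤ_[p])^(l+0) ∣ d - ((B' : ℤ) : ℤ_[p])
      rw [Nat.add_zero]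
      have heq : d - ((B' : ℤ) : ℤ_[p]) = (d - (D:ℤ_[p])) - ((B' - D : ℤ) : ℤ_[p]) := by
        push_cast; ring
      rw [heq]
      exact dvd_sub ((pow_dvd_pow _ hlM).trans hDd) (cast_pow_dvd l hB')
  · -- a is a unit
    have hpA : ¬ (p:ℤ) ∣ A := by
      intro h
      apply hpa
      have h1 : (p:ℤ_[p]) ∣ (A:ℤ_[p]) := by
        have := cast_pow_dvd (p := p) 1 (pow_one (p:ℤ) ▸ h)
        rwa [pow_one] at this
      have h2 : v*a = (v*a - (A:ℤ_[p])) + (A:ℤ_[p]) := by ring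
      rw [h2]
      exact dvd_add ((dvd_pow_self _ (by omega : M ≠ 0)).trans hAa) h1
    have hcop : IsCoprime (A : ℤ) ((p:ℤ)^l) :=
      ((hpZ.coprime_iff_not_dvd.mpr hpA).symm).pow_right
    have h1 : (p:ℤ)^(l+k) ∣ A*D - B*C - 1 := (pow_dvd_pow _ hlkM).trans hDint
    have h2 : (p:ℤ)^(l+k) ∣ (p:ℤ)^l * C := by
      rw [pow_add]
      exact mul_dvd_mul_left _ hCk
    obtain ⟨B', C', D', hdet', hB', hC', hD'⟩ :=
      core_fix A B C D ((p:ℤ)^l) ((p:ℤ)^(l+k)) hcop h1 h2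
    refine ⟨!![A, B'; C', D'], ?_, ?_, ?_, ?_, ?_, ?_⟩
    · rw [Matrix.det_fin_two_of]; exact hdet'
    · show (p:ℤ)^k ∣ C'
      have : C' = (C' - C) + C := by ring
      rw [this]
      exact dvd_add ((pow_dvd_pow _ (by omega : k ≤ l + k)).trans hC') hCk
    · show (p:ℤ_[p])^l ∣ a - ((A : ℤ) : ℤ_[p])
      have heq : a - ((A : ℤ) : ℤ_[p]) = a * (1 - v) + (v*a - (A:ℤ_[p])) := by
        ring
      rw [heq]
      exact dvd_add (h1v.mul_left a) ((pow_dvd_pow _ hlM).trans hAa)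
    · show (p:ℤ_[p])^l ∣ b - ((B' : ℤ) : ℤ_[p])
      have heq : b - ((B' : ℤ) : ℤ_[p]) =
          b * (1 - v) + (v*b - (B:ℤ_[p])) - ((B' - B : ℤ) : ℤ_[p]) := by
        push_cast; ring
      rw [heq]
      exact dvd_sub (dvd_add (h1v.mul_left b) ((pow_dvd_pow _ hlM).trans hBb))
        (cast_pow_dvd l hB')
    · show (p:ℤ_[p])^(l+k) ∣ c - ((C' : ℤ) : ℤ_[p])
      have heq : c - ((C' : ℤ) : ℤ_[p]) = (c - (C:ℤ_[p])) - ((C' - C : ℤ) : ℤ_[p]) := by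
        push_cast; ring
      rw [heq]
      exact dvd_sub ((pow_dvd_pow _ hlkM).trans hCc) (cast_pow_dvd (l+k) hC')
    · show (p:ℤ_[p])^(l+k) ∣ d - ((D' : ℤ) : ℤ_[p])
      have heq : d - ((D' : ℤ) : ℤ_[p]) = (d - (D:ℤ_[p])) - ((D' - D : ℤ) : ℤ_[p]) := by
        push_cast; ring
      rw [heq]
      exact dvd_sub ((pow_dvd_pow _ hlkM).trans hDd) (cast_pow_dvd (l+k) hD')
end

section
/- For every X ∈ Γ₀(p^k) such that det X ≡ 1 (mod p^l) or det X ≡ −1 (mod p^l), there exists a matrix Y ∈ M₂(ℤ) with det Y = 1 or det Y = −1 and with (2,1) entry divisible by p^k, such that (viewing Y as a matrix over ℤ_p via the inclusion ℤ → ℤ_p) X − Y ∈ A·M₂(ℤ_p), i.e., p^l divides both entries of the first row of X − Y and p^{l+k} divides both entries of the second row of X − Y. -/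
/-!
Approximate the entries of `X` by integers: the top row modulo `p^l`, the bottom row modulo
`p^(l+k)`. Since `det X` is a unit, the bottom row of `X` is unimodular, so its approximation
`(c, d)` can be chosen coprime in `ℤ`, and `p^k ∣ c` is inherited from `X`. The determinant of
the approximation is `±1` modulo `p^l`, and as `(c, d)` is coprime the top row can be moved by
multiples of `p^l` so that the determinant becomes exactly `±1`.
-/

open Matrix

theorem Matrix.dvd_det_sub_det {n R : Type*} [Fintype n] [DecidableEq n] [CommRing R]
    {A B : Matrix n n R} {r : R} (h : ∀ i j, r ∣ A i j - B i j) : r ∣ A.det - B.det := by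
  let f := Ideal.Quotient.mk (Ideal.span {r})
  have hAB : f.mapMatrix A = f.mapMatrix B := by
    ext i j
    exact Ideal.Quotient.eq.2 (Ideal.mem_span_singleton.2 (h i j))
  rw [← Ideal.mem_span_singleton, ← Ideal.Quotient.eq, RingHom.map_det, RingHom.map_det, hAB]

theorem Matrix.isCoprime_of_isUnit_det_fin_two {R : Type*} [CommRing R]
    {M : Matrix (Fin 2) (Fin 2) R} (hM : IsUnit M.det) : IsCoprime (M 1 0) (M 1 1) := by
  obtain ⟨u, hu⟩ := hM
  rw [det_fin_two] at hu
  exact ⟨-(↑u⁻¹ * M 0 1), ↑u⁻¹ * M 0 0, by linear_combination (↑u⁻¹ : R) * hu.symm + u.inv_mul⟩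

section CommRing

variable {R : Type*} [CommRing R]

theorem IsCoprime.exists_isCoprime_dvd_sub {c n : R} (h : IsCoprime c n) (d : R) :
    ∃ d', IsCoprime c d' ∧ n ∣ d' - d := by
  obtain ⟨x, y, hxy⟩ := h
  refine ⟨1 - x * (1 - d) * c, ⟨x * (1 - d), 1, by ring⟩, ⟨y * (1 - d), ?_⟩⟩
  linear_combination (d - 1) * hxy

theorem IsCoprime.exists_dvd_sub_mul_sub_mul_eq {a b c d ε n : R} (hcd : IsCoprime c d)
    (h : n ∣ a * d - b * c - ε) :
    ∃ a' b', n ∣ a' - a ∧ n ∣ b' - b ∧ a' * d - b' * c = ε := by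
  obtain ⟨m, hm⟩ := h
  obtain ⟨x, y, hxy⟩ := hcd
  refine ⟨a - n * m * y, b + n * m * x, ⟨-(m * y), by ring⟩, ⟨m * x, by ring⟩, ?_⟩
  linear_combination hm - n * m * hxy

end CommRing

namespace PadicInt

variable {p : ℕ} [Fact p.Prime]

theorem exists_dvd_sub_intCast (z : ℤ_[p]) (n : ℕ) : ∃ a : ℤ, (p : ℤ_[p]) ^ n ∣ z - a :=
  ⟨z.appr n, by exact_mod_cast Ideal.mem_span_singleton.1 (appr_spec n z)⟩

theorem dvd_sub_intCast_of_dvd {n : ℕ} {z : ℤ_[p]} {a a' : ℤ} (hz : (p : ℤ_[p]) ^ n ∣ z - a)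
    (ha : (p : ℤ) ^ n ∣ a' - a) : (p : ℤ_[p]) ^ n ∣ z - a' := by
  have ha' := (pow_p_dvd_int_iff n _).2 ha
  push_cast at ha'
  simpa using dvd_sub hz ha'

theorem exists_isCoprime_dvd_sub_intCast {u v : ℤ_[p]} (huv : IsCoprime u v) (n : ℕ) :
    ∃ c d : ℤ, IsCoprime c d ∧ (p : ℤ_[p]) ^ n ∣ u - c ∧ (p : ℤ_[p]) ^ n ∣ v - d := by
  -- Approximating modulo `p^(n+1)` rather than `p^n` keeps the case `n = 0` uniform.
  obtain ⟨c₀, hc₀⟩ := exists_dvd_sub_intCast u (n + 1)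
  obtain ⟨d₀, hd₀⟩ := exists_dvd_sub_intCast v (n + 1)
  have weaken : (p : ℤ_[p]) ^ n ∣ (p : ℤ_[p]) ^ (n + 1) := pow_dvd_pow _ n.le_succ
  have hp : Prime (p : ℤ) := Nat.prime_iff_prime_int.1 Fact.out
  have dvd_of_dvd_approx {z : ℤ_[p]} {a : ℤ} (hz : (p : ℤ_[p]) ^ (n + 1) ∣ z - a)
      (ha : (p : ℤ) ∣ a) : (p : ℤ_[p]) ∣ z := by
    have ha' : (p : ℤ_[p]) ∣ a := by simpa using (pow_p_dvd_int_iff 1 a).2 (by simpa using ha)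
    simpa using dvd_add ((dvd_pow_self _ n.succ_ne_zero).trans hz) ha'
  have hunit : ¬ (p : ℤ) ∣ c₀ ∨ ¬ (p : ℤ) ∣ d₀ := by
    by_contra! h
    exact p_nonunit (huv.isUnit_of_dvd' (dvd_of_dvd_approx hc₀ h.1) (dvd_of_dvd_approx hd₀ h.2))
  rcases hunit with hc | hd
  · obtain ⟨d, hcd, hdd⟩ :=
      ((hp.coprime_iff_not_dvd.2 hc).symm.pow_right (n := n + 1)).exists_isCoprime_dvd_sub d₀
    exact ⟨c₀, d, hcd, weaken.trans hc₀, weaken.trans (dvd_sub_intCast_of_dvd hd₀ hdd)⟩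
  · obtain ⟨c, hdc, hcc⟩ :=
      ((hp.coprime_iff_not_dvd.2 hd).symm.pow_right (n := n + 1)).exists_isCoprime_dvd_sub c₀
    exact ⟨c, d₀, hdc.symm, weaken.trans (dvd_sub_intCast_of_dvd hc₀ hcc), weaken.trans hd₀⟩

end PadicInt

/-- For every `X ∈ Γ₀(p^k)` with `det X ≡ 1 (mod p^l)` or
`det X ≡ −1 (mod p^l)`, there exists `Y ∈ M₂(ℤ)` with `det Y = 1` or `det Y = −1`, and
with `(2,1)` entry divisible by `p^k`, such that, viewing `Y` over `ℤ_p`,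
`X − Y ∈ diag(p^l, p^{l+k})·M₂(ℤ_p)`, i.e. `p^l` divides both entries of the first row
of `X − Y` and `p^{l+k}` divides both entries of the second row. -/
theorem stmt_7 (p : ℕ) [Fact p.Prime] (l k : ℕ) (X : GL (Fin 2) ℤ_[p])
    (hX : (p : ℤ_[p]) ^ k ∣ (X : Matrix (Fin 2) (Fin 2) ℤ_[p]) 1 0)
    (hdet : (p : ℤ_[p]) ^ l ∣ (Matrix.det (X : Matrix (Fin 2) (Fin 2) ℤ_[p]) - 1) ∨
            (p : ℤ_[p]) ^ l ∣ (Matrix.det (X : Matrix (Fin 2) (Fin 2) ℤ_[p]) + 1)) :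
    ∃ Y : Matrix (Fin 2) (Fin 2) ℤ, (Y.det = 1 ∨ Y.det = -1) ∧ (p : ℤ) ^ k ∣ Y 1 0 ∧
      (p : ℤ_[p]) ^ l ∣
        ((X : Matrix (Fin 2) (Fin 2) ℤ_[p]) - Y.map (Int.cast : ℤ → ℤ_[p])) 0 0 ∧
      (p : ℤ_[p]) ^ l ∣
        ((X : Matrix (Fin 2) (Fin 2) ℤ_[p]) - Y.map (Int.cast : ℤ → ℤ_[p])) 0 1 ∧
      (p : ℤ_[p]) ^ (l + k) ∣
        ((X : Matrix (Fin 2) (Fin 2) ℤ_[p]) - Y.map (Int.cast : ℤ → ℤ_[p])) 1 0 ∧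
      (p : ℤ_[p]) ^ (l + k) ∣
        ((X : Matrix (Fin 2) (Fin 2) ℤ_[p]) - Y.map (Int.cast : ℤ → ℤ_[p])) 1 1 := by
  set M : Matrix (Fin 2) (Fin 2) ℤ_[p] := (X : Matrix (Fin 2) (Fin 2) ℤ_[p])
  obtain ⟨ε, hε, hMε⟩ : ∃ ε : ℤ, (ε = 1 ∨ ε = -1) ∧ (p : ℤ_[p]) ^ l ∣ M.det - ε := by
    rcases hdet with h | h
    · exact ⟨1, .inl rfl, by simpa using h⟩
    · exact ⟨-1, .inr rfl, by simpa using h⟩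
  have hbottom := isCoprime_of_isUnit_det_fin_two ((isUnit_iff_isUnit_det M).1 X.isUnit)
  obtain ⟨c, d, hcd, hc, hd⟩ := PadicInt.exists_isCoprime_dvd_sub_intCast hbottom (l + k)
  obtain ⟨a, ha⟩ := PadicInt.exists_dvd_sub_intCast (M 0 0) l
  obtain ⟨b, hb⟩ := PadicInt.exists_dvd_sub_intCast (M 0 1) l
  have hlk : (p : ℤ_[p]) ^ l ∣ (p : ℤ_[p]) ^ (l + k) := pow_dvd_pow _ (l.le_add_right k)
  have happrox : (p : ℤ) ^ l ∣ a * d - b * c - ε := by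
    have hM := dvd_det_sub_det (A := M) (B := !![a, b; c, d].map (Int.cast : ℤ → ℤ_[p]))
      (r := (p : ℤ_[p]) ^ l) (by
        intro i j
        fin_cases i <;> fin_cases j
        exacts [ha, hb, hlk.trans hc, hlk.trans hd])
    rw [← PadicInt.pow_p_dvd_int_iff]
    simpa [det_fin_two] using dvd_sub hMε hM
  obtain ⟨a', b', ha', hb', hdet'⟩ := hcd.exists_dvd_sub_mul_sub_mul_eq happrox
  refine ⟨!![a', b'; c, d], by simpa [det_fin_two] using hdet' ▸ hε, ?_,
    by simpa using PadicInt.dvd_sub_intCast_of_dvd ha ha',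
    by simpa using PadicInt.dvd_sub_intCast_of_dvd hb hb', by simpa using hc, by simpa using hd⟩
  rw [← PadicInt.pow_p_dvd_int_iff]
  simpa using dvd_sub hX ((pow_dvd_pow _ (k.le_add_left l)).trans hc)
end

section
/- Let X be the matrix with rows (a, b) and (p^k·c, d), where a, b, c, d ∈ ℤ_p, and assume X ∈ GL₂(ℤ_p). Then X·𝐚 − 𝐚 ∈ A·ℤ_p² if and only if there exist x, y ∈ ℤ_p such that a = 1 − b·p^i + p^{l−j}·x and d = 1 − p^{k−i}·c + p^{l−j+k−i}·y. -/
open Matrix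

/-- Let `X = !![a, b; p^k·c, d]` with `a, b, c, d ∈ ℤ_p`, and assume
`X ∈ GL₂(ℤ_p)` (i.e. `det X` is a unit). With `A = diag(p^l, p^{l+k})` and
`𝐚 = (p^j, p^{i+j})ᵀ` (where `j ≤ l` and `i ≤ k`), we have `X·𝐚 − 𝐚 ∈ A·ℤ_p²` if and
only if there exist `x, y ∈ ℤ_p` with `a = 1 − b·p^i + p^{l−j}·x` and
`d = 1 − p^{k−i}·c + p^{l−j+k−i}·y`. -/
theorem stmt_8 (p : ℕ) [Fact p.Prime] (l k i j : ℕ) (hj : j ≤ l) (hi : i ≤ k)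
    (a b c d : ℤ_[p])
    (hX : IsUnit (Matrix.det !![a, b; (p : ℤ_[p]) ^ k * c, d])) :
    (∃ w : Fin 2 → ℤ_[p],
        !![a, b; (p : ℤ_[p]) ^ k * c, d] *ᵥ ![(p : ℤ_[p]) ^ j, (p : ℤ_[p]) ^ (i + j)] -
            ![(p : ℤ_[p]) ^ j, (p : ℤ_[p]) ^ (i + j)] =
          Matrix.diagonal ![(p : ℤ_[p]) ^ l, (p : ℤ_[p]) ^ (l + k)] *ᵥ w) ↔
    (∃ x y : ℤ_[p],
        a = 1 - b * (p : ℤ_[p]) ^ i + (p : ℤ_[p]) ^ (l - j) * x ∧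
        d = 1 - (p : ℤ_[p]) ^ (k - i) * c + (p : ℤ_[p]) ^ (l - j + (k - i)) * y) := by

  have hp : (p : ℤ_[p]) ≠ 0 := by
    exact_mod_cast Nat.cast_ne_zero.mpr (Fact.out (p := p.Prime)).ne_zero
  have hpow1 : (p:ℤ_[p])^l = (p:ℤ_[p])^j * (p:ℤ_[p])^(l-j) := by
    rw [← pow_add]; congr 1; omega
  have hpow2 : (p:ℤ_[p])^(l+k) = (p:ℤ_[p])^(i+j) * (p:ℤ_[p])^(l-j+(k-i)) := by
    rw [← pow_add]; congr 1; omega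
  have hpow3 : (p:ℤ_[p])^k * (p:ℤ_[p])^j = (p:ℤ_[p])^(i+j) * (p:ℤ_[p])^(k-i) := by
    rw [← pow_add, ← pow_add]; congr 1; omega
  have hij : (p:ℤ_[p])^(i+j) = (p:ℤ_[p])^j * (p:ℤ_[p])^i := by
    rw [← pow_add]; congr 1; omega
  constructor
  · rintro ⟨w, hw⟩
    have h0 := congrFun hw 0
    have h1 := congrFun hw 1
    simp [Matrix.mulVec, Matrix.mulVec_diagonal, Fin.sum_univ_two] at h0 h1
    refine ⟨w 0, w 1, ?_, ?_⟩
    · refine mul_left_cancel₀ (pow_ne_zero j hp) ?_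
      linear_combination h0 - b * hij + w 0 * hpow1
    · refine mul_left_cancel₀ (pow_ne_zero (i+j) hp) ?_
      linear_combination h1 + w 1 * hpow2 - c * hpow3
  · rintro ⟨x, y, hx, hy⟩
    refine ⟨![x, y], ?_⟩
    funext u
    fin_cases u <;>
      simp [Matrix.mulVec, Matrix.mulVec_diagonal, Fin.sum_univ_two]
    · linear_combination (p:ℤ_[p])^j * hx - x * hpow1 + b * hij
    · linear_combination (p:ℤ_[p])^(i+j) * hy - y * hpow2 + c * hpow3
end

section
/- Put n = min(i, k−i, l−j). Then for every u ∈ ℤ_p^×, there exists X ∈ Γ₀(p^k) with X·𝐚 − 𝐚 ∈ A·ℤ_p² and det X ≡ u (mod p^l) if and only if u ≡ 1 (mod p^n). In other words, the image under the determinant map, taken modulo U_l, of the stabilizer of 𝐚 mod A·ℤ_p² in Γ₀(p^k) is exactly U_n/U_l. -/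
open Matrix

/-- Put `n = min(i, k−i, l−j)`, `A = diag(p^l, p^{l+k})` and
`𝐚 = (p^j, p^{i+j})ᵀ` (with `j ≤ l`, `i ≤ k`). For every unit `u ∈ ℤ_p^×` there exists
`X ∈ Γ₀(p^k)` with `X·𝐚 − 𝐚 ∈ A·ℤ_p²` and `det X ≡ u (mod p^l)` if and only if
`u ≡ 1 (mod p^n)`; that is, the image under the determinant, modulo `U_l`, of the
stabilizer of `𝐚 mod A·ℤ_p²` in `Γ₀(p^k)` is exactly `U_n/U_l`. -/
theorem stmt_9 (p : ℕ) [Fact p.Prime] (l k i j : ℕ) (hj : j ≤ l) (hi : i ≤ k)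
    (u : ℤ_[p]ˣ) :
    (∃ X : GL (Fin 2) ℤ_[p],
        (p : ℤ_[p]) ^ k ∣ (X : Matrix (Fin 2) (Fin 2) ℤ_[p]) 1 0 ∧
        (∃ w : Fin 2 → ℤ_[p],
          (X : Matrix (Fin 2) (Fin 2) ℤ_[p]) *ᵥ ![(p : ℤ_[p]) ^ j, (p : ℤ_[p]) ^ (i + j)] -
              ![(p : ℤ_[p]) ^ j, (p : ℤ_[p]) ^ (i + j)] =
            Matrix.diagonal ![(p : ℤ_[p]) ^ l, (p : ℤ_[p]) ^ (l + k)] *ᵥ w) ∧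
        (p : ℤ_[p]) ^ l ∣ (Matrix.det (X : Matrix (Fin 2) (Fin 2) ℤ_[p]) - (u : ℤ_[p]))) ↔
    (p : ℤ_[p]) ^ (min i (min (k - i) (l - j))) ∣ ((u : ℤ_[p]) - 1) := by
  have hp : (p : ℤ_[p]) ≠ 0 := by exact_mod_cast (Fact.out : p.Prime).ne_zero
  set n := min i (min (k - i) (l - j)) with hn
  have hni : n ≤ i := min_le_left _ _
  have hnki : n ≤ k - i := le_trans (min_le_right _ _) (min_le_left _ _)
  have hnlj : n ≤ l - j := le_trans (min_le_right _ _) (min_le_right _ _)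
  have hnk : n ≤ k := le_trans hnki (Nat.sub_le _ _)
  have hnl : n ≤ l := le_trans hnlj (Nat.sub_le _ _)
  constructor
  · rintro ⟨X, ⟨c', hc⟩, ⟨w, hw⟩, ⟨e, he⟩⟩
    set M := (X : Matrix (Fin 2) (Fin 2) ℤ_[p]) with hM
    have h0 := congrFun hw 0
    have h1 := congrFun hw 1
    simp [Matrix.mulVec, dotProduct, Fin.sum_univ_two, Matrix.diagonal] at h0 h1
    have e1 : (p:ℤ_[p])^(i+j) = p^i * p^j := pow_add _ _ _
    have e2 : (p:ℤ_[p])^l = p^j * p^(l-j) := by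
      rw [← pow_add, Nat.add_sub_cancel' hj]
    have e3 : (p:ℤ_[p])^(l+k) = p^(i+j) * p^((l-j)+(k-i)) := by
      rw [← pow_add]; congr 1; omega
    have e4 : (p:ℤ_[p])^k = p^(k-i) * p^i := by
      rw [← pow_add, Nat.sub_add_cancel hi]
    have ha : M 0 0 - 1 = p^(l-j) * w 0 - M 0 1 * p^i := by
      have hcancel : (p:ℤ_[p])^j * (M 0 0 - 1 + M 0 1 * p^i) =
          (p:ℤ_[p])^j * (p^(l-j) * w 0) := by
        linear_combination h0 - M 0 1 * e1 + w 0 * e2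
      have := mul_left_cancel₀ (pow_ne_zero j hp) hcancel
      linear_combination this
    have hd : M 1 1 - 1 = p^((l-j)+(k-i)) * w 1 - p^(k-i) * c' := by
      have hcancel : (p:ℤ_[p])^(i+j) * (M 1 1 - 1 + p^(k-i) * c') =
          (p:ℤ_[p])^(i+j) * (p^((l-j)+(k-i)) * w 1) := by
        rw [hc] at h1
        linear_combination h1 + w 1 * e3 - c' * p^j * e4 - c' * p^(k-i) * e1
      have := mul_left_cancel₀ (pow_ne_zero (i+j) hp) hcancel
      linear_combination this
    have hdet : M.det = M 0 0 * M 1 1 - M 0 1 * M 1 0 := Matrix.det_fin_two M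
    have key : (u : ℤ_[p]) - 1 =
        (M 0 0 - 1) * M 1 1 + (M 1 1 - 1) - M 0 1 * ((p:ℤ_[p])^k * c') - (p:ℤ_[p])^l * e := by
      rw [hdet, hc] at he
      linear_combination -he
    rw [key]
    have d1 : (p:ℤ_[p])^n ∣ M 0 0 - 1 := by
      rw [ha]
      exact dvd_sub ((pow_dvd_pow _ hnlj).mul_right _) ((pow_dvd_pow _ hni).mul_left _)
    have d2 : (p:ℤ_[p])^n ∣ M 1 1 - 1 := by
      rw [hd]
      exact dvd_sub ((pow_dvd_pow _ (le_trans hnlj (Nat.le_add_right _ _))).mul_right _)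
        ((pow_dvd_pow _ hnki).mul_right _)
    exact dvd_sub (dvd_sub (dvd_add (d1.mul_right _) d2)
      (((pow_dvd_pow _ hnk).mul_right _).mul_left _)) ((pow_dvd_pow _ hnl).mul_right _)
  · intro h
    rcases le_total i (min (k - i) (l - j)) with h1 | h1
    · -- n = i
      rw [hn, min_eq_left h1] at h
      obtain ⟨t, ht⟩ := h
      set M : Matrix (Fin 2) (Fin 2) ℤ_[p] := !![(u:ℤ_[p]), -t; 0, 1] with hMdef
      have hdet : M.det = (u:ℤ_[p]) := by simp [hMdef, Matrix.det_fin_two_of]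
      have hU : IsUnit M := by
        rw [Matrix.isUnit_iff_isUnit_det, hdet]; exact u.isUnit
      refine ⟨hU.unit, ?_, ⟨0, ?_⟩, ?_⟩
      · rw [hU.unit_spec]; simp [hMdef]
      · rw [hU.unit_spec]
        funext x
        fin_cases x <;>
          simp [hMdef, Matrix.mulVec, dotProduct, Fin.sum_univ_two, Matrix.diagonal] <;>
          ring_nf
        · linear_combination (p:ℤ_[p])^j * ht - t * (pow_add (p:ℤ_[p]) i j)
      · rw [hU.unit_spec, hdet]; simp
    · rw [hn, min_eq_right h1] at h
      rcases le_total (k - i) (l - j) with h2 | h2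
      · -- n = k - i
        rw [min_eq_left h2] at h
        obtain ⟨s, hs⟩ := h
        set M : Matrix (Fin 2) (Fin 2) ℤ_[p] := !![1, 0; -((p:ℤ_[p])^k * s), (u:ℤ_[p])] with hMdef
        have hdet : M.det = (u:ℤ_[p]) := by simp [hMdef, Matrix.det_fin_two_of]
        have hU : IsUnit M := by
          rw [Matrix.isUnit_iff_isUnit_det, hdet]; exact u.isUnit
        refine ⟨hU.unit, ?_, ⟨0, ?_⟩, ?_⟩
        · rw [hU.unit_spec]; simp [hMdef]
        · rw [hU.unit_spec]
          funext x
          fin_cases x <;>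
            simp [hMdef, Matrix.mulVec, dotProduct, Fin.sum_univ_two, Matrix.diagonal]
          have e4 : (p:ℤ_[p])^k = p^(k-i) * p^i := by
            rw [← pow_add, Nat.sub_add_cancel hi]
          linear_combination (p:ℤ_[p])^(i+j) * hs - s * p^j * e4 - s * p^(k-i) * (pow_add (p:ℤ_[p]) i j)
        · rw [hU.unit_spec, hdet]; simp
      · -- n = l - j
        rw [min_eq_right h2] at h
        obtain ⟨r, hr⟩ := h
        set M : Matrix (Fin 2) (Fin 2) ℤ_[p] := !![(u:ℤ_[p]), 0; 0, 1] with hMdef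
        have hdet : M.det = (u:ℤ_[p]) := by simp [hMdef, Matrix.det_fin_two_of]
        have hU : IsUnit M := by
          rw [Matrix.isUnit_iff_isUnit_det, hdet]; exact u.isUnit
        refine ⟨hU.unit, ?_, ⟨![r, 0], ?_⟩, ?_⟩
        · rw [hU.unit_spec]; simp [hMdef]
        · rw [hU.unit_spec]
          funext x
          fin_cases x <;>
            simp [hMdef, Matrix.mulVec, dotProduct, Fin.sum_univ_two, Matrix.diagonal]
          have e2 : (p:ℤ_[p])^l = p^j * p^(l-j) := by
            rw [← pow_add, Nat.add_sub_cancel' hj]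
          linear_combination (p:ℤ_[p])^j * hr - r * e2
        · rw [hU.unit_spec, hdet]; simp
end

section
/- Let B ∈ M₂(ℤ) be a matrix with det B ≠ 0 such that no prime q ≠ p divides det B, and suppose there exist U, V ∈ GL₂(ℤ_p) with B = U·A·V when B and A are regarded as matrices over ℤ_p. Then there exist matrices U', V' ∈ GL₂(ℤ) with B = U'·A·V' over ℤ. -/
/-!
Over `ℤ` a `2 × 2` matrix of nonzero determinant is equivalent to a diagonal one: row and
column Bézout operations make the corner entry the gcd of its row or column, and this strictly
decreases the corner until it divides the rest of its row. Equivalence (over any commutative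
ring) preserves the divisibility of all entries by a given element and the determinant up to a
unit. Over `ℤ_[p]` the hypothesis therefore says that `p ^ l` is the exact power of `p` dividing
all entries of `B` and that `det B` has `p`-adic valuation `2l + k`; since `det B = ±p ^ m`,
the integral diagonal form is `diag(±p ^ a, ±p ^ b)` with `a + b = 2l + k` and `min a b = l`,
which up to signs and a swap is `diag(p ^ l, p ^ (l + k))`.
-/

namespace Matrix

section Equivalent

variable {n R : Type*} [Fintype n] [DecidableEq n] [CommRing R]

def Equivalent (A B : Matrix n n R) : Prop :=
  ∃ U V : GL n R, B = (U : Matrix n n R) * A * V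

namespace Equivalent

variable {A B C : Matrix n n R}

theorem symm : Equivalent A B → Equivalent B A := by
  rintro ⟨U, V, rfl⟩
  exact ⟨U⁻¹, V⁻¹, by simp [mul_assoc]⟩

theorem trans : Equivalent A B → Equivalent B C → Equivalent A C := by
  rintro ⟨U, V, rfl⟩ ⟨U', V', rfl⟩
  exact ⟨U' * U, V * V', by simp [mul_assoc]⟩

theorem of_isUnit {U V : Matrix n n R} (hU : IsUnit U) (hV : IsUnit V) :
    Equivalent A (U * A * V) :=
  ⟨hU.unit, hV.unit, rfl⟩

theorem mul_left {U : Matrix n n R} (hU : IsUnit U) : Equivalent A (U * A) := by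
  simpa using of_isUnit (A := A) hU isUnit_one

theorem mul_right {V : Matrix n n R} (hV : IsUnit V) : Equivalent A (A * V) := by
  simpa using of_isUnit (A := A) isUnit_one hV

theorem dvd_apply {d : R} (h : Equivalent A B) (hA : ∀ i j, d ∣ A i j) (i j : n) :
    d ∣ B i j := by
  obtain ⟨U, V, rfl⟩ := h
  simp only [mul_apply]
  exact Finset.dvd_sum fun l _ => dvd_mul_of_dvd_left
    (Finset.dvd_sum fun k _ => dvd_mul_of_dvd_right (hA k l) _) _

theorem forall_dvd_iff {d : R} (h : Equivalent A B) :
    (∀ i j, d ∣ A i j) ↔ ∀ i j, d ∣ B i j :=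
  ⟨h.dvd_apply, h.symm.dvd_apply⟩

theorem associated_det (h : Equivalent A B) : Associated A.det B.det := by
  obtain ⟨U, V, rfl⟩ := h
  have hU := (isUnit_iff_isUnit_det _).mp U.isUnit
  have hV := (isUnit_iff_isUnit_det _).mp V.isUnit
  rw [det_mul, det_mul]
  exact (associated_unit_mul_left _ _ hU).symm.trans (associated_mul_unit_right _ _ hV)

end Equivalent

theorem equivalent_diagonal_of_associated {v w : n → R} (h : ∀ i, Associated (v i) (w i)) :
    Equivalent (diagonal v) (diagonal w) := by
  choose u hu using h
  have hw : diagonal w = diagonal v * diagonal fun i => (u i : R) := by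
    rw [diagonal_mul_diagonal]
    exact congrArg diagonal (funext hu).symm
  rw [hw]
  exact Equivalent.mul_right (isUnit_diagonal.mpr (Pi.isUnit_iff.mpr fun i => (u i).isUnit))

theorem equivalent_diagonal_swap (x y : R) :
    Equivalent (diagonal ![x, y]) (diagonal ![y, x]) := by
  have hS : IsUnit !![(0 : R), 1; 1, 0] := by
    rw [isUnit_iff_isUnit_det, det_fin_two_of]
    simp
  convert Equivalent.of_isUnit (A := diagonal ![x, y]) hS hS using 1
  ext i j
  fin_cases i <;> fin_cases j <;> simp [vecMul, dotProduct, Fin.sum_univ_two]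

theorem equivalent_diagonal_of_dvd {B : Matrix (Fin 2) (Fin 2) R} (h10 : B 1 0 = 0)
    (h : B 0 0 ∣ B 0 1) : Equivalent B (diagonal ![B 0 0, B 1 1]) := by
  obtain ⟨q, hq⟩ := h
  have hT : IsUnit !![(1 : R), -q; 0, 1] := by
    rw [isUnit_iff_isUnit_det, det_fin_two_of]
    simp
  convert Equivalent.mul_right (A := B) hT using 1
  ext i j
  fin_cases i <;> fin_cases j <;> simp [mul_apply, Fin.sum_univ_two, hq, h10]

end Equivalent

theorem forall_pow_dvd_diagonal_pow_iff {R : Type*} [CommRing R] [IsDomain R] {π : R}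
    (hπ₀ : π ≠ 0) (hπ : ¬IsUnit π) (a b n : ℕ) :
    (∀ i j, π ^ n ∣ diagonal ![π ^ a, π ^ b] i j) ↔ n ≤ min a b := by
  simp [Fin.forall_fin_two, pow_dvd_pow_iff hπ₀ hπ]

end Matrix

open Matrix

theorem Int.exists_det_eq_one_bezout (a b : ℤ) :
    ∃ V : Matrix (Fin 2) (Fin 2) ℤ, V.det = 1 ∧
      a * V 0 0 + b * V 1 0 = a.gcd b ∧ a * V 0 1 + b * V 1 1 = 0 := by
  by_cases hg : a.gcd b = 0
  · obtain ⟨rfl, rfl⟩ := Int.gcd_eq_zero_iff.mp hg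
    exact ⟨1, by simp⟩
  obtain ⟨a', ha'⟩ : (a.gcd b : ℤ) ∣ a := Int.gcd_dvd_left a b
  obtain ⟨b', hb'⟩ : (a.gcd b : ℤ) ∣ b := Int.gcd_dvd_right a b
  have hbez : (a.gcd b : ℤ) = a * a.gcdA b + b * a.gcdB b := Int.gcd_eq_gcd_ab a b
  have hdet : a' * a.gcdA b + b' * a.gcdB b = 1 := by
    refine mul_left_cancel₀ (Int.natCast_ne_zero.mpr hg) ?_
    linear_combination -hbez - a.gcdA b * ha' - a.gcdB b * hb'
  refine ⟨!![a.gcdA b, -b'; a.gcdB b, a'], ?_, ?_, ?_⟩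
  · rw [det_fin_two_of]
    linear_combination hdet
  · simpa using hbez.symm
  · simp only [of_apply, cons_val', cons_val_zero, cons_val_one, empty_val', cons_val_fin_one]
    linear_combination -b' * ha' + a' * hb'

theorem Int.exists_isUnit_mul_right_apply_eq_gcd (B : Matrix (Fin 2) (Fin 2) ℤ) :
    ∃ V : Matrix (Fin 2) (Fin 2) ℤ, IsUnit V ∧
      (B * V) 0 0 = (B 0 0).gcd (B 0 1) ∧ (B * V) 0 1 = 0 := by
  obtain ⟨V, hV, h0, h1⟩ := Int.exists_det_eq_one_bezout (B 0 0) (B 0 1)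
  refine ⟨V, (isUnit_iff_isUnit_det V).mpr (hV ▸ isUnit_one), ?_, ?_⟩ <;>
    simpa [mul_apply, Fin.sum_univ_two]

theorem Int.exists_isUnit_mul_left_apply_eq_gcd (B : Matrix (Fin 2) (Fin 2) ℤ) :
    ∃ U : Matrix (Fin 2) (Fin 2) ℤ, IsUnit U ∧
      (U * B) 0 0 = (B 0 0).gcd (B 1 0) ∧ (U * B) 1 0 = 0 := by
  obtain ⟨V, hV, h0, h1⟩ := Int.exists_det_eq_one_bezout (B 0 0) (B 1 0)
  refine ⟨Vᵀ, (isUnit_iff_isUnit_det _).mpr (by simp [hV]), ?_, ?_⟩ <;>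
    simpa [mul_apply, Fin.sum_univ_two, mul_comm]

theorem Int.exists_equivalent_diagonal_of_apply_ne_zero (B : Matrix (Fin 2) (Fin 2) ℤ)
    (hB : B 0 0 ≠ 0) : ∃ d₁ d₂ : ℤ, Equivalent B (diagonal ![d₁, d₂]) := by
  induction hn : (B 0 0).natAbs using Nat.strong_induction_on generalizing B with
  | _ n ih =>
  obtain ⟨U, hU, hU₀, hU₁⟩ := Int.exists_isUnit_mul_left_apply_eq_gcd B
  set C := U * B
  have hBC : Equivalent B C := Equivalent.mul_left hU
  have hC : C 0 0 ≠ 0 := hU₀ ▸ Int.natCast_ne_zero.mpr (Int.gcd_pos_of_ne_zero_left _ hB).ne'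
  by_cases hdvd : C 0 0 ∣ C 0 1
  · exact ⟨_, _, hBC.trans (equivalent_diagonal_of_dvd hU₁ hdvd)⟩
  obtain ⟨V, hV, hV₀, -⟩ := Int.exists_isUnit_mul_right_apply_eq_gcd C
  -- `C 0 0 ∤ C 0 1`, so `gcd (C 0 0) (C 0 1) < |C 0 0| ≤ |B 0 0|`
  have hlt : ((C * V) 0 0).natAbs < n := by
    rw [hV₀, Int.natAbs_natCast, ← hn]
    refine lt_of_lt_of_le (lt_of_le_of_ne (Int.gcd_le_natAbs_left _ hC) ?_) ?_
    · exact fun h => hdvd (Int.gcd_eq_natAbs_left_iff_dvd.mp h)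
    · rw [hU₀, Int.natAbs_natCast]
      exact Int.gcd_le_natAbs_left _ hB
  have hCV : (C * V) 0 0 ≠ 0 :=
    hV₀ ▸ Int.natCast_ne_zero.mpr (Int.gcd_pos_of_ne_zero_left _ hC).ne'
  obtain ⟨d₁, d₂, hd⟩ := ih _ hlt (C * V) hCV rfl
  exact ⟨d₁, d₂, (hBC.trans (Equivalent.mul_right hV)).trans hd⟩

theorem Int.exists_equivalent_diagonal (B : Matrix (Fin 2) (Fin 2) ℤ) (hB : B.det ≠ 0) :
    ∃ d₁ d₂ : ℤ, Equivalent B (diagonal ![d₁, d₂]) := by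
  obtain ⟨U, hU, hU₀, -⟩ := Int.exists_isUnit_mul_left_apply_eq_gcd B
  have hC : (U * B) 0 0 ≠ 0 := by
    rw [hU₀, Int.natCast_ne_zero, Ne, Int.gcd_eq_zero_iff]
    rintro ⟨h0, h1⟩
    exact hB (by simp [det_fin_two, h0, h1])
  obtain ⟨d₁, d₂, hd⟩ := Int.exists_equivalent_diagonal_of_apply_ne_zero _ hC
  exact ⟨d₁, d₂, (Equivalent.mul_left hU).trans hd⟩

theorem Int.equivalent_diagonal_prime_pow {p : ℕ} (hp : p.Prime) {l k : ℕ}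
    {B : Matrix (Fin 2) (Fin 2) ℤ} (hcontent : ∀ n, (∀ i j, (p : ℤ) ^ n ∣ B i j) ↔ n ≤ l)
    (hdet : B.det.natAbs = p ^ (l + (l + k))) :
    Equivalent (diagonal ![(p : ℤ) ^ l, (p : ℤ) ^ (l + k)]) B := by
  obtain ⟨d₁, d₂, hd⟩ := Int.exists_equivalent_diagonal B
    (Int.natAbs_ne_zero.mp (hdet ▸ pow_ne_zero _ hp.ne_zero))
  have hprod : d₁.natAbs * d₂.natAbs = p ^ (l + (l + k)) := by
    rw [← hdet, ← Int.natAbs_mul, ← Int.associated_iff_natAbs]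
    simpa [det_diagonal, Fin.prod_univ_two] using hd.symm.associated_det
  obtain ⟨a, -, ha⟩ := (Nat.dvd_prime_pow hp).mp (Dvd.intro _ hprod)
  obtain ⟨b, -, hb⟩ := (Nat.dvd_prime_pow hp).mp (Dvd.intro_left _ hprod)
  have hab : a + b = l + (l + k) :=
    Nat.pow_right_injective hp.two_le (by simp only [pow_add, ← ha, ← hb, hprod])
  have hB : Equivalent (diagonal ![(p : ℤ) ^ a, (p : ℤ) ^ b]) B := by
    refine (equivalent_diagonal_of_associated fun i => ?_).trans hd.symm
    fin_cases i <;> simp [Int.associated_iff_natAbs, ha, hb]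
  have hmin : min a b = l := by
    have hpℤ := Nat.prime_iff_prime_int.mp hp
    have key n : n ≤ min a b ↔ n ≤ l := by
      rw [← hcontent, ← hB.forall_dvd_iff,
        forall_pow_dvd_diagonal_pow_iff hpℤ.ne_zero hpℤ.not_isUnit]
    exact le_antisymm ((key _).mp le_rfl) ((key _).mpr le_rfl)
  rcases le_total a b with hle | hle
  · obtain ⟨rfl, rfl⟩ : a = l ∧ b = l + k := by omega
    exact hB
  · obtain ⟨rfl, rfl⟩ : b = l ∧ a = l + k := by omega
    exact (equivalent_diagonal_swap _ _).trans hB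

theorem PadicInt.natAbs_eq_pow_of_associated {p : ℕ} [Fact p.Prime] {z : ℤ} {N : ℕ}
    (hz : z ≠ 0) (hq : ∀ q : ℕ, q.Prime → q ≠ p → ¬ (q : ℤ) ∣ z)
    (h : Associated (z : ℤ_[p]) ((p : ℤ_[p]) ^ N)) : z.natAbs = p ^ N := by
  obtain ⟨m, hm⟩ : ∃ m, z.natAbs = p ^ m :=
    ⟨_, Nat.eq_prime_pow_of_unique_prime_dvd (Int.natAbs_ne_zero.mpr hz) fun hq' hd =>
      by_contra fun hne => hq _ hq' hne (Int.ofNat_dvd_left.mpr hd)⟩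
  have hpow : Associated ((p : ℤ_[p]) ^ m) ((p : ℤ_[p]) ^ N) := by
    have := (Int.associated_natAbs z).map (Int.castRingHom ℤ_[p])
    rw [hm] at this
    simpa using this.symm.trans h
  have hp := PadicInt.prime_p (p := p)
  rw [hm, le_antisymm ((pow_dvd_pow_iff hp.ne_zero hp.not_isUnit).mp hpow.dvd)
    ((pow_dvd_pow_iff hp.ne_zero hp.not_isUnit).mp hpow.symm.dvd)]

/-- Let `B ∈ M₂(ℤ)` with `det B ≠ 0`, such that no prime `q ≠ p`
divides `det B`. If there exist `U, V ∈ GL₂(ℤ_p)` with `B = U·A·V` over `ℤ_p`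
(where `A = diag(p^l, p^{l+k})`), then there exist `U', V' ∈ GL₂(ℤ)` with
`B = U'·A·V'` over `ℤ`. -/
theorem stmt_10 (p : ℕ) [Fact p.Prime] (l k : ℕ) (B : Matrix (Fin 2) (Fin 2) ℤ)
    (hdet : B.det ≠ 0)
    (hq : ∀ q : ℕ, q.Prime → q ≠ p → ¬ ((q : ℤ) ∣ B.det))
    (h : ∃ U V : GL (Fin 2) ℤ_[p],
        B.map (Int.cast : ℤ → ℤ_[p]) =
          (U : Matrix (Fin 2) (Fin 2) ℤ_[p]) *
            Matrix.diagonal ![(p : ℤ_[p]) ^ l, (p : ℤ_[p]) ^ (l + k)] *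
            (V : Matrix (Fin 2) (Fin 2) ℤ_[p])) :
    ∃ U' V' : GL (Fin 2) ℤ,
      B = (U' : Matrix (Fin 2) (Fin 2) ℤ) *
            Matrix.diagonal ![(p : ℤ) ^ l, (p : ℤ) ^ (l + k)] *
            (V' : Matrix (Fin 2) (Fin 2) ℤ) := by
  have hB : Equivalent (diagonal ![(p : ℤ_[p]) ^ l, (p : ℤ_[p]) ^ (l + k)])
      (B.map Int.cast) := h
  have hp := PadicInt.prime_p (p := p)
  refine Int.equivalent_diagonal_prime_pow (Fact.out : p.Prime) (fun n => ?_) ?_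
  · rw [← min_eq_left (Nat.le_add_right l k),
      ← forall_pow_dvd_diagonal_pow_iff hp.ne_zero hp.not_isUnit, hB.forall_dvd_iff]
    simp only [map_apply, PadicInt.pow_p_dvd_int_iff]
  · refine PadicInt.natAbs_eq_pow_of_associated hdet hq ?_
    simpa [Int.cast_det, det_diagonal, Fin.prod_univ_two, ← pow_add] using
      hB.associated_det.symm
end

section
/- The map sending a finite-index ℤ-submodule M of ℤ^r to the Ẑ-submodule of Ẑ^r generated by the image of M under the coordinatewise inclusion ℤ^r → Ẑ^r is a bijection from the set of finite-index ℤ-submodules of ℤ^r onto the set of finite-index Ẑ-submodules of Ẑ^r, and its inverse sends a finite-index Ẑ-submodule N of Ẑ^r to the preimage of N under the inclusion ℤ^r → Ẑ^r. -/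
instance (q : Nat.Primes) : Fact (q : ℕ).Prime := ⟨q.2⟩

/-- `Ẑ = ∏_p ℤ_p`, the product over all primes of the rings of `p`-adic integers. -/
abbrev ZHat : Type := ∀ q : Nat.Primes, ℤ_[(q : ℕ)]

lemma zhat_dvd_of_forall {x y : ZHat} (h : ∀ q, x q ∣ y q) : x ∣ y :=
  ⟨fun q => (h q).choose, funext fun q => (h q).choose_spec⟩

lemma isUnit_p {p : ℕ} (hp : p.Prime) (q : Nat.Primes) (h : p ≠ (q:ℕ)) :
    IsUnit ((p : ℕ) : ℤ_[(q:ℕ)]) := by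
  rw [PadicInt.isUnit_iff]
  refine le_antisymm (PadicInt.norm_le_one _) ?_
  by_contra hlt
  push_neg at hlt
  have h2 : ‖((p : ℤ) : ℤ_[(q:ℕ)])‖ < 1 := by push_cast at hlt ⊢; exact hlt
  rw [PadicInt.norm_int_lt_one_iff_dvd] at h2
  have := Int.natCast_dvd_natCast.mp h2
  exact h ((Nat.prime_dvd_prime_iff_eq q.2 hp).mp this).symm

lemma zhat_approx : ∀ n : ℕ, 0 < n → ∀ a : ZHat, ∃ b : ℤ, (n : ZHat) ∣ a - (b : ZHat) := by
  refine Nat.recOnPosPrimePosCoprime ?_ ?_ ?_ ?_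
  · -- prime powers
    rintro p k hp hk - a
    have hp' : p.Prime := hp
    haveI : Fact p.Prime := ⟨hp'⟩
    let P : Nat.Primes := ⟨p, hp'⟩
    refine ⟨((a P).appr k : ℤ), zhat_dvd_of_forall fun q => ?_⟩
    simp only [Pi.natCast_apply, Pi.sub_apply, Pi.intCast_apply]
    by_cases hq : P = q
    · subst hq
      have hs := (a P).appr_spec k
      rw [Ideal.mem_span_singleton] at hs
      have : ((p^k : ℕ) : ℤ_[(P:ℕ)]) = ((P:ℕ) : ℤ_[(P:ℕ)])^k := by push_cast; ring
      rw [this]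
      have hcast : (((a P).appr k : ℤ) : ℤ_[(P:ℕ)]) = (((a P).appr k : ℕ) : ℤ_[(P:ℕ)]) := by
        push_cast; ring
      rw [hcast]
      exact hs
    · have hne : p ≠ (q:ℕ) := fun hh => hq (Subtype.ext hh)
      have hu : IsUnit ((p^k : ℕ) : ℤ_[(q:ℕ)]) := by
        push_cast; exact (isUnit_p hp' q hne).pow k
      exact hu.dvd
  · intro h; omega
  · intro _ a; exact ⟨0, by simp⟩
  · rintro a b ha hb hab Ha Hb - x
    obtain ⟨b1, h1⟩ := Ha (by omega) x
    obtain ⟨b2, h2⟩ := Hb (by omega) x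
    have hco : IsCoprime (a : ℤ) (b : ℤ) := Int.isCoprime_iff_gcd_eq_one.mpr (by exact_mod_cast hab)
    obtain ⟨u, v, huv⟩ := hco
    set c : ℤ := b1 * (v * b) + b2 * (u * a) with hc
    have hZa : ((a:ℤ) : ZHat) = ((a : ℕ) : ZHat) := by push_cast; ring
    have hZb : ((b:ℤ) : ZHat) = ((b : ℕ) : ZHat) := by push_cast; ring
    refine ⟨c, ?_⟩
    have hda : (a : ZHat) ∣ x - (c : ZHat) := by
      have hint : (a:ℤ) ∣ b1 - c := ⟨(b1 - b2) * u, by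
        have h1' : (1 : ℤ) - v*b = u*a := by linarith [huv]
        calc b1 - c = b1 * (1 - v*b) - b2*(u*a) := by rw [hc]; ring
          _ = (a:ℤ) * ((b1 - b2) * u) := by rw [h1']; ring⟩
      have hZ : ((a:ℤ):ZHat) ∣ ((b1 - c : ℤ):ZHat) := by
        simpa using map_dvd (Int.castRingHom ZHat) hint
      push_cast at hZ
      have heq : x - (c : ZHat) = (x - (b1 : ZHat)) + ((b1 : ZHat) - (c : ZHat)) := by ring
      rw [heq]
      exact dvd_add h1 hZ
    have hdb : (b : ZHat) ∣ x - (c : ZHat) := by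
      have hint : (b:ℤ) ∣ b2 - c := ⟨(b2 - b1) * v, by
        have h1' : (1 : ℤ) - u*a = v*b := by linarith [huv]
        calc b2 - c = b2 * (1 - u*a) - b1*(v*b) := by rw [hc]; ring
          _ = (b:ℤ) * ((b2 - b1) * v) := by rw [h1']; ring⟩
      have hZ : ((b:ℤ):ZHat) ∣ ((b2 - c : ℤ):ZHat) := by
        simpa using map_dvd (Int.castRingHom ZHat) hint
      push_cast at hZ
      have heq : x - (c : ZHat) = (x - (b2 : ZHat)) + ((b2 : ZHat) - (c : ZHat)) := by ring
      rw [heq]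
      exact dvd_add h2 hZ
    have hcoZ : IsCoprime ((a:ℕ) : ZHat) ((b:ℕ) : ZHat) := by
      refine ⟨(u:ZHat), (v:ZHat), ?_⟩
      rw [← hZa, ← hZb]
      have := congrArg (fun z : ℤ => (z : ZHat)) huv
      push_cast at this ⊢
      linear_combination this
    have := hcoZ.mul_dvd hda hdb
    have hh : ((a*b : ℕ) : ZHat) = ((a:ℕ):ZHat) * ((b:ℕ):ZHat) := by push_cast; ring
    rwa [hh]

lemma zhat_dvd_int : ∀ n : ℕ, 0 < n → ∀ x : ℤ, (n : ZHat) ∣ (x : ZHat) → (n:ℤ) ∣ x := by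
  refine Nat.recOnPosPrimePosCoprime ?_ ?_ ?_ ?_
  · rintro p k hp hk - x hd
    have hp' : p.Prime := hp
    haveI : Fact p.Prime := ⟨hp'⟩
    let P : Nat.Primes := ⟨p, hp'⟩
    obtain ⟨c, hcc⟩ := hd
    have hq : ((p^k : ℕ) : ℤ_[(P:ℕ)]) ∣ ((x:ℤ) : ℤ_[(P:ℕ)]) := by
      refine ⟨c P, ?_⟩
      have := congrFun hcc P
      simpa using this
    have h2 : ((P:ℕ) : ℤ_[(P:ℕ)])^k ∣ ((x:ℤ) : ℤ_[(P:ℕ)]) := by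
      have e : ((p^k : ℕ) : ℤ_[(P:ℕ)]) = ((P:ℕ) : ℤ_[(P:ℕ)])^k := by push_cast; ring
      rwa [e] at hq
    rw [PadicInt.pow_p_dvd_int_iff] at h2
    exact_mod_cast h2
  · intro h; omega
  · intro _ x _; exact one_dvd x
  · rintro a b ha hb hab Ha Hb - x hd
    have hdA : (a : ZHat) ∣ (x : ZHat) := dvd_trans ⟨(b : ZHat), by push_cast; ring⟩ hd
    have hdB : (b : ZHat) ∣ (x : ZHat) := dvd_trans ⟨(a : ZHat), by push_cast; ring⟩ hd
    have h1 := Ha (by omega) x hdA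
    have h2 := Hb (by omega) x hdB
    have hco : IsCoprime (a : ℤ) (b : ℤ) := Int.isCoprime_iff_gcd_eq_one.mpr (by exact_mod_cast hab)
    have := hco.mul_dvd h1 h2
    exact_mod_cast this


/-- The coordinatewise inclusion `ℤ^r → Ẑ^r`, as a `ℤ`-linear map. -/
noncomputable def incl (r : ℕ) : (Fin r → ℤ) →ₗ[ℤ] (Fin r → ZHat) :=
  LinearMap.pi fun i =>
    (Int.castRingHom ZHat).toAddMonoidHom.toIntLinearMap.comp (LinearMap.proj i)


@[simp] lemma incl_apply (r : ℕ) (x : Fin r → ℤ) (i : Fin r) :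
    incl r x i = ((x i : ℤ) : ZHat) := rfl

lemma exists_card_smul {R M : Type*} [Ring R] [AddCommGroup M] [Module R M]
    (S : Submodule R M) (h : Finite (M ⧸ S)) : ∃ n : ℕ, 0 < n ∧ ∀ x : M, n • x ∈ S := by
  refine ⟨Nat.card (M ⧸ S), Nat.card_pos, fun x => ?_⟩
  have h0 : (Nat.card (M ⧸ S)) • (Submodule.Quotient.mk x : M ⧸ S) = 0 := card_nsmul_eq_zero'
  have h1 : (Submodule.Quotient.mk (Nat.card (M ⧸ S) • x) : M ⧸ S) = 0 := by
    rw [← h0]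
    exact map_nsmul S.mkQ (Nat.card (M ⧸ S)) x
  exact (Submodule.Quotient.mk_eq_zero S).mp h1

lemma dvd_mem (r n : ℕ) (S : Submodule ZHat (Fin r → ZHat))
    (hS : ∀ i : Fin r, incl r ((n:ℤ) • Pi.single i 1) ∈ S)
    (w : Fin r → ZHat) (hw : ∀ i, (n : ZHat) ∣ w i) : w ∈ S := by
  choose c hc using hw
  have hrep : w = ∑ i : Fin r, c i • incl r ((n:ℤ) • Pi.single i 1) := by
    funext j
    rw [Finset.sum_apply]
    rw [Finset.sum_eq_single j]
    · simp only [Pi.smul_apply, incl_apply, Pi.smul_apply, Pi.single_eq_same, smul_eq_mul]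
      push_cast
      rw [hc j]
      ring
    · intro i _ hij
      simp only [Pi.smul_apply, incl_apply, Pi.smul_apply, smul_eq_mul]
      rw [Pi.single_eq_of_ne (Ne.symm hij)]
      push_cast
      ring
    · intro h; exact absurd (Finset.mem_univ j) h
  rw [hrep]
  exact Submodule.sum_mem _ fun i _ => S.smul_mem _ (hS i)

lemma span_approx (r n : ℕ) (hn : 0 < n) (M : Submodule ℤ (Fin r → ℤ))
    (z : Fin r → ZHat) (hz : z ∈ Submodule.span ZHat (⇑(incl r) '' (M : Set (Fin r → ℤ)))) :
    ∃ m ∈ M, ∀ i, (n : ZHat) ∣ z i - incl r m i := by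
  induction hz using Submodule.span_induction with
  | mem x h =>
    obtain ⟨m, hm, rfl⟩ := h
    exact ⟨m, hm, fun i => by simp⟩
  | zero => exact ⟨0, M.zero_mem, fun i => by simp⟩
  | add x y hx hy ihx ihy =>
    obtain ⟨m1, hm1, h1⟩ := ihx
    obtain ⟨m2, hm2, h2⟩ := ihy
    refine ⟨m1 + m2, M.add_mem hm1 hm2, fun i => ?_⟩
    have := dvd_add (h1 i) (h2 i)
    have heq : x i - incl r m1 i + (y i - incl r m2 i) = (x + y) i - incl r (m1 + m2) i := by
      simp only [Pi.add_apply, incl_apply]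
      push_cast
      ring
    rwa [heq] at this
  | smul a x hx ih =>
    obtain ⟨m, hm, h⟩ := ih
    obtain ⟨b, hb⟩ := zhat_approx n hn a
    refine ⟨b • m, M.smul_mem b hm, fun i => ?_⟩
    have heq : (a • x) i - incl r (b • m) i
        = a * (x i - incl r m i) + (a - (b:ZHat)) * incl r m i := by
      simp only [Pi.smul_apply, incl_apply, Pi.smul_apply, smul_eq_mul]
      push_cast
      ring
    rw [heq]
    exact dvd_add ((h i).mul_left a) (hb.mul_right _)

lemma incl_smul_single_mem (r n : ℕ) (M : Submodule ℤ (Fin r → ℤ))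
    (hsm : ∀ x : Fin r → ℤ, n • x ∈ M) (i : Fin r) :
    incl r ((n:ℤ) • Pi.single i 1) ∈ Submodule.span ZHat (⇑(incl r) '' (M : Set (Fin r → ℤ))) := by
  refine Submodule.subset_span ⟨(n:ℤ) • Pi.single i 1, ?_, rfl⟩
  have := hsm (Pi.single i 1)
  rwa [← Nat.cast_smul_eq_nsmul ℤ] at this

/-- The map sending a finite-index `ℤ`-submodule `M` of `ℤ^r` to the
`Ẑ`-submodule of `Ẑ^r` generated by the image of `M` under the coordinatewise inclusion
`ℤ^r → Ẑ^r` is a bijection from the set of finite-index `ℤ`-submodules of `ℤ^r` onto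
the set of finite-index `Ẑ`-submodules of `Ẑ^r`, with inverse sending a finite-index
`Ẑ`-submodule `N` of `Ẑ^r` to the preimage of `N` under the inclusion. -/
theorem stmt_11 (r : ℕ) (hr : 0 < r) :
    (∀ M : Submodule ℤ (Fin r → ℤ), Finite ((Fin r → ℤ) ⧸ M) →
      Finite ((Fin r → ZHat) ⧸ Submodule.span ZHat (⇑(incl r) '' (M : Set (Fin r → ℤ))))) ∧
    (∀ M : Submodule ℤ (Fin r → ℤ), Finite ((Fin r → ℤ) ⧸ M) →
      Submodule.comap (incl r)
        ((Submodule.span ZHat (⇑(incl r) '' (M : Set (Fin r → ℤ)))).restrictScalars ℤ)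
        = M) ∧
    (∀ N : Submodule ZHat (Fin r → ZHat), Finite ((Fin r → ZHat) ⧸ N) →
      Submodule.span ZHat
          (⇑(incl r) '' ((Submodule.comap (incl r) (N.restrictScalars ℤ)) : Set (Fin r → ℤ)))
        = N) := by
  refine ⟨?_, ?_, ?_⟩
  · -- finiteness
    intro M hFin
    obtain ⟨n, hn, hsm⟩ := exists_card_smul M hFin
    haveI : NeZero n := ⟨hn.ne'⟩
    set K := Submodule.span ZHat (⇑(incl r) '' (M : Set (Fin r → ℤ))) with hKdef
    refine Finite.of_surjective
      (fun c : Fin r → ZMod n =>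
        (Submodule.Quotient.mk (incl r fun i => ((c i).val : ℤ)) : (Fin r → ZHat) ⧸ K)) ?_
    intro q
    obtain ⟨y, rfl⟩ := Submodule.Quotient.mk_surjective K q
    choose b hb using fun i => zhat_approx n hn (y i)
    refine ⟨fun i => ((b i : ZMod n)), ?_⟩
    rw [Submodule.Quotient.eq]
    refine dvd_mem r n K (incl_smul_single_mem r n M hsm) _ fun i => ?_
    have hval : (n : ℤ) ∣ (((b i : ZMod n)).val : ℤ) - b i := by
      have : ((((b i : ZMod n)).val : ℤ) - b i : ℤ) % (n:ℤ) = 0 := by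
        rw [Int.sub_emod, ZMod.val_intCast]
        simp [Int.emod_emod_of_dvd]
      exact Int.dvd_of_emod_eq_zero this
    have hcast : (n : ZHat) ∣ (((((b i : ZMod n)).val : ℤ) - b i : ℤ) : ZHat) := by
      obtain ⟨c, hc⟩ := hval
      exact ⟨(c : ZHat), by rw [hc]; push_cast; ring⟩
    have heq : (incl r (fun i => (((b i : ZMod n)).val : ℤ)) - y) i
        = (((((b i : ZMod n)).val : ℤ) - b i : ℤ) : ZHat) + -(y i - b i) := by
      simp only [Pi.sub_apply, incl_apply]
      push_cast
      ring
    rw [heq]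
    exact dvd_add hcast ((hb i).neg_right)
  · -- comap ∘ span = id
    intro M hFin
    obtain ⟨n, hn, hsm⟩ := exists_card_smul M hFin
    apply le_antisymm
    · intro x hx
      rw [Submodule.mem_comap] at hx
      obtain ⟨m, hm, hdvd⟩ := span_approx r n hn M _ hx
      have hdiv : ∀ i, (n:ℤ) ∣ x i - m i := by
        intro i
        refine zhat_dvd_int n hn _ ?_
        have := hdvd i
        have heq : incl r x i - incl r m i = ((x i - m i : ℤ) : ZHat) := by
          simp only [incl_apply]; push_cast; ring
        rwa [heq] at this
      choose c hc using hdiv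
      have hxm : x - m = (n:ℤ) • c := by
        funext i
        simp only [Pi.sub_apply, Pi.smul_apply, smul_eq_mul]
        exact hc i
      have : x - m ∈ M := by
        rw [hxm, Nat.cast_smul_eq_nsmul ℤ]
        exact hsm c
      have := M.add_mem hm this
      simpa using this
    · intro x hx
      rw [Submodule.mem_comap]
      exact Submodule.subset_span ⟨x, hx, rfl⟩
  · -- span ∘ comap = id
    intro N hFin
    obtain ⟨n, hn, hsm⟩ := exists_card_smul N hFin
    set M := Submodule.comap (incl r) (N.restrictScalars ℤ) with hMdef
    have hMsub : ∀ x : Fin r → ℤ, n • x ∈ M := by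
      intro x
      rw [hMdef, Submodule.mem_comap]
      show incl r (n • x) ∈ N
      rw [map_nsmul]
      exact hsm _
    have hNdvd : ∀ i : Fin r, incl r ((n:ℤ) • Pi.single i 1) ∈ N := by
      intro i
      have := hsm (incl r (Pi.single i 1))
      rwa [← map_nsmul, ← Nat.cast_smul_eq_nsmul ℤ] at this
    apply le_antisymm
    · rw [Submodule.span_le]
      rintro _ ⟨x, hx, rfl⟩
      exact hx
    · intro y hy
      choose b hb using fun i => zhat_approx n hn (y i)
      have hdiff : ∀ i, (n : ZHat) ∣ (y - incl r b) i := by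
        intro i
        simpa using hb i
      have hyb : y - incl r b ∈ N :=
        dvd_mem r n N hNdvd _ hdiff
      have hbN : incl r b ∈ N := by
        have := N.sub_mem hy hyb
        simpa using this
      have hbM : b ∈ M := hbN
      have h1 : incl r b ∈ Submodule.span ZHat (⇑(incl r) '' (M : Set (Fin r → ℤ))) :=
        Submodule.subset_span ⟨b, hbM, rfl⟩
      have h2 : y - incl r b ∈ Submodule.span ZHat (⇑(incl r) '' (M : Set (Fin r → ℤ))) :=
        dvd_mem r n _ (incl_smul_single_mem r n M hMsub) _ hdiff
      have := Submodule.add_mem _ h1 h2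
      simpa using this
end

section
/- Let G be a group acting on a set S, let x ∈ S, and let Stab(x) denote the stabilizer of x in G. Let V be a commutative group, f : G → V a group homomorphism, and H a subgroup of G containing the kernel of f. Then the set of H-orbits on the G-orbit of x is in bijection with the quotient of the subgroup f(G) of V by its subgroup f(H)·f(Stab(x)); in particular, the cardinality of the set of H-orbits on the G-orbit of x equals the index of f(H)·f(Stab(x)) in f(G). -/
/-- Let `G` act on a set `S`, let `x ∈ S`, let `V` be a commutative
group, `f : G → V` a homomorphism, and `H ≤ G` a subgroup containing `ker f`. Then the
set of `H`-orbits on the `G`-orbit of `x` is in bijection with the quotient of the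
subgroup `f(G) = f.range` of `V` by its subgroup `f(H)·f(Stab(x))` (the product of
subgroups, i.e. `f(H) ⊔ f(Stab(x))` since `V` is commutative); in particular, the
cardinality of the set of `H`-orbits on `G·x` equals the index of `f(H)·f(Stab(x))`
in `f(G)`. -/
theorem stmt_12 {G : Type*} [Group G] {S : Type*} [MulAction G S] (x : S)
    {V : Type*} [CommGroup V] (f : G →* V) (H : Subgroup G) (hH : f.ker ≤ H) :
    Nonempty
      (Quotient (MulAction.orbitRel H (MulAction.orbit G x)) ≃
        f.range ⧸ ((H.map f ⊔ (MulAction.stabilizer G x).map f).subgroupOf f.range)) ∧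
    Nat.card (Quotient (MulAction.orbitRel H (MulAction.orbit G x))) =
      ((H.map f ⊔ (MulAction.stabilizer G x).map f).subgroupOf f.range).index := by
  classical
  set K : Subgroup f.range :=
    (H.map f ⊔ (MulAction.stabilizer G x).map f).subgroupOf f.range with hKdef
  -- H is normal thanks to ker f ≤ H and commutativity of V
  have hHnorm : ∀ g h : G, h ∈ H → g * h * g⁻¹ ∈ H := by
    intro g h hh
    have hker : g * h * g⁻¹ * h⁻¹ ∈ f.ker := by
      simp [MonoidHom.mem_ker, mul_comm, mul_assoc, mul_left_comm]
    have := H.mul_mem (hH hker) hh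
    simpa [mul_assoc] using this
  let q : G → f.range ⧸ K := fun g => QuotientGroup.mk ⟨f g, ⟨g, rfl⟩⟩
  have hq_iff : ∀ g g' : G, q g = q g' ↔
      (f g)⁻¹ * f g' ∈ H.map f ⊔ (MulAction.stabilizer G x).map f := by
    intro g g'
    rw [QuotientGroup.eq]
    simp [hKdef, Subgroup.mem_subgroupOf]
  let gOf : MulAction.orbit G x → G := fun y => Classical.choose y.2
  have gOf_spec : ∀ y : MulAction.orbit G x, gOf y • x = (y : S) :=
    fun y => Classical.choose_spec y.2
  -- independence of representative
  have hrep : ∀ (g : G) (y : MulAction.orbit G x), g • x = (y : S) → q g = q (gOf y) := by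
    intro g y hg
    rw [hq_iff]
    have hs : g⁻¹ * gOf y ∈ MulAction.stabilizer G x := by
      rw [MulAction.mem_stabilizer_iff, mul_smul, gOf_spec, ← hg, inv_smul_smul]
    exact Subgroup.mem_sup_right ⟨g⁻¹ * gOf y, hs, by simp⟩
  -- relation implies equal q
  have hsound : ∀ a b : MulAction.orbit G x,
      (MulAction.orbitRel H (MulAction.orbit G x)).r a b → q (gOf a) = q (gOf b) := by
    intro a b hab
    obtain ⟨h, hhb⟩ := hab
    have hval : ((h : G) * gOf b) • x = (a : S) := by
      rw [mul_smul, gOf_spec, ← hhb]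
      rfl
    have h1 : q ((h : G) * gOf b) = q (gOf a) := (hrep _ a hval)
    have h2 : q ((h : G) * gOf b) = q (gOf b) := by
      rw [hq_iff]
      refine Subgroup.mem_sup_left ⟨(h : G)⁻¹, H.inv_mem h.2, ?_⟩
      simp [mul_comm, mul_assoc, mul_left_comm]
    rw [← h1, h2]
  let F : Quotient (MulAction.orbitRel H (MulAction.orbit G x)) → f.range ⧸ K :=
    Quotient.lift (fun y => q (gOf y)) hsound
  have hFsurj : Function.Surjective F := by
    rintro v
    induction v using QuotientGroup.induction_on with
    | H v =>
      obtain ⟨g, hg⟩ := v.2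
      refine ⟨Quotient.mk _ ⟨g • x, MulAction.mem_orbit x g⟩, ?_⟩
      have : q (gOf ⟨g • x, MulAction.mem_orbit x g⟩) = q g := (hrep g _ rfl).symm
      show q (gOf _) = _
      rw [this]
      exact congrArg QuotientGroup.mk (Subtype.ext hg)
  have hFinj : Function.Injective F := by
    intro a b hab
    induction a using Quotient.inductionOn with
    | h a =>
    induction b using Quotient.inductionOn with
    | h b =>
    apply Quotient.sound
    change q (gOf a) = q (gOf b) at hab
    rw [hq_iff] at hab
    rw [Subgroup.mem_sup] at hab
    obtain ⟨u, hu, w, hw, huw⟩ := hab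
    obtain ⟨h, hhH, rfl⟩ := hu
    obtain ⟨s, hsS, rfl⟩ := hw
    set g := gOf a with hg
    set g' := gOf b with hg'
    have hk : g⁻¹ * (h⁻¹ * (g' * s⁻¹)) ∈ f.ker := by
      rw [MonoidHom.mem_ker]
      have : f h * f s = (f g)⁻¹ * f g' := huw
      simp only [map_mul, map_inv]
      rw [show (f g)⁻¹ * ((f h)⁻¹ * (f g' * (f s)⁻¹)) = ((f g)⁻¹ * f g') * (f h * f s)⁻¹ by
        simp [mul_comm, mul_assoc, mul_left_comm], ← this]
      simp [mul_comm, mul_assoc, mul_left_comm]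
    -- g' = g * (that) * ... ; construct h'' = g * (h*k)⁻¹ * g⁻¹ style element
    set k : G := g⁻¹ * (h⁻¹ * (g' * s⁻¹)) with hkdef
    have hkH : k ∈ H := hH hk
    -- g' = h * g * k * s
    have hg'eq : g' = h * (g * (k * s)) := by
      rw [hkdef]; group
    -- h'' := (h * g * k * g⁻¹) ∈ H, and h''⁻¹ ... we need h' with h' • b = a? direction
    -- relation a ~ b means a ∈ orbit H b: ∃ h', h' • b = a, i.e. (h' * g') • x = g • x
    -- take h' := g * (k⁻¹ * (h⁻¹ * g⁻¹)) ... check: h' * g' = g * k⁻¹ * h⁻¹ * g⁻¹ * h * g * k * s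
    refine ⟨⟨g * k⁻¹ * g⁻¹ * h⁻¹, ?_⟩, ?_⟩
    · exact H.mul_mem (hHnorm g k⁻¹ (H.inv_mem hkH)) (H.inv_mem hhH)
    · apply Subtype.ext
      show (g * k⁻¹ * g⁻¹ * h⁻¹) • (b : S) = (a : S)
      rw [← gOf_spec b, ← gOf_spec a, ← hg, ← hg', ← mul_smul]
      have hs' : s • x = x := hsS
      have : g * k⁻¹ * g⁻¹ * h⁻¹ * g' = g * s := by
        rw [hg'eq]; group
      rw [this, mul_smul, hs']
  refine ⟨⟨Equiv.ofBijective F ⟨hFinj, hFsurj⟩⟩, ?_⟩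
  rw [show K.index = Nat.card (f.range ⧸ K) from rfl]
  exact Nat.card_congr (Equiv.ofBijective F ⟨hFinj, hFsurj⟩)
end
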